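/- Let m ≥ 2 be even and let A be a real m-th order n-dimensional symmetric tensor. Then A has at least one H-eigenvalue, i.e., there exist λ ∈ ℝ and a nonzero x ∈ ℝⁿ with A x^{m-1} = λ x^{[m-1]}. -/

import Mathlib

open Finset

variable {m n : ℕ}

/-- The homogeneous form `A xᵐ` of an `m`-th order `n`-dimensional tensor `A`. -/
noncomputable def tApply (A : (Fin m → Fin n) → ℝ) (x : Fin n → ℝ) : ℝ :=
  ∑ f : Fin m → Fin n, A f * ∏ j, x (f j)

/-- A tensor is symmetric if its entries are invariant under any permutation of the indices. -/
def IsSymmT (A : (Fin m → Fin n) → ℝ) : Prop :=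
  ∀ (σ : Equiv.Perm (Fin m)) (f : Fin m → Fin n), A (f ∘ σ) = A f

/-- The `i`-th component of the vector `A x^{m-1}`:
`Σ_{i₂,…,i_m} a_{i i₂ ⋯ i_m} x_{i₂} ⋯ x_{i_m}`. -/
noncomputable def tVec [NeZero m] (A : (Fin m → Fin n) → ℝ) (x : Fin n → ℝ) (i : Fin n) : ℝ :=
  ∑ f ∈ univ.filter (fun f : Fin m → Fin n => f 0 = i),
    A f * ∏ j ∈ univ.erase (0 : Fin m), x (f j)

/-- The `i`-th component of the vector `A x^{m-1}` for complex `x`. -/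
noncomputable def tVecC [NeZero m] (A : (Fin m → Fin n) → ℝ) (x : Fin n → ℂ) (i : Fin n) : ℂ :=
  ∑ f ∈ univ.filter (fun f : Fin m → Fin n => f 0 = i),
    (A f : ℂ) * ∏ j ∈ univ.erase (0 : Fin m), x (f j)

/-- The sum of the absolute values of the off-diagonal entries in the `i`-th row of `A`. -/
noncomputable def offDiagSum [NeZero m] (A : (Fin m → Fin n) → ℝ) (i : Fin n) : ℝ :=
  ∑ f ∈ univ.filter (fun f : Fin m → Fin n => f 0 = i ∧ f ≠ (fun _ => i)), |A f|

/-- A diagonally dominated tensor. -/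
def DiagDom [NeZero m] (A : (Fin m → Fin n) → ℝ) : Prop :=
  ∀ i : Fin n, offDiagSum A i ≤ A (fun _ => i)

/-- A strictly diagonally dominated tensor. -/
def StrictDiagDom [NeZero m] (A : (Fin m → Fin n) → ℝ) : Prop :=
  ∀ i : Fin n, offDiagSum A i < A (fun _ => i)

/-- The sum of all the entries in the `i`-th row of `A`. -/
noncomputable def rowSum [NeZero m] (A : (Fin m → Fin n) → ℝ) (i : Fin n) : ℝ :=
  ∑ f ∈ univ.filter (fun f : Fin m → Fin n => f 0 = i), A f

/-- A B₀ tensor. -/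
def IsB0 [NeZero m] (A : (Fin m → Fin n) → ℝ) : Prop :=
  ∀ i : Fin n, 0 ≤ rowSum A i ∧
    ∀ f : Fin m → Fin n, f 0 = i → f ≠ (fun _ => i) →
      A f ≤ (1 / (n : ℝ) ^ (m - 1)) * rowSum A i

/-- A B tensor. -/
def IsB [NeZero m] (A : (Fin m → Fin n) → ℝ) : Prop :=
  ∀ i : Fin n, 0 < rowSum A i ∧
    ∀ f : Fin m → Fin n, f 0 = i → f ≠ (fun _ => i) →
      A f < (1 / (n : ℝ) ^ (m - 1)) * rowSum A i

/-- A Z tensor: all off-diagonal entries are non-positive. -/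
def IsZ [NeZero m] (A : (Fin m → Fin n) → ℝ) : Prop :=
  ∀ (i : Fin n) (f : Fin m → Fin n), f 0 = i → f ≠ (fun _ => i) → A f ≤ 0

/-- The partially all one tensor `E^J`. -/
noncomputable def allOne (m : ℕ) {n : ℕ} (J : Finset (Fin n)) : (Fin m → Fin n) → ℝ :=
  fun f => if ∀ j, f j ∈ J then 1 else 0

/-- `Ĵ(B)`: the set of rows of `B` with at least one positive off-diagonal entry. -/
noncomputable def hatJ [NeZero m] (B : (Fin m → Fin n) → ℝ) : Finset (Fin n) :=
  univ.filter fun i => ∃ f : Fin m → Fin n, f 0 = i ∧ f ≠ (fun _ => i) ∧ 0 < B f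

lemma swap_term [NeZero m] (A : (Fin m → Fin n) → ℝ) (hA : IsSymmT A)
    (x v : Fin n → ℝ) (j : Fin m) :
    ∑ f : Fin m → Fin n, A f * ((∏ k ∈ univ.erase j, x (f k)) * v (f j))
      = ∑ f : Fin m → Fin n, A f * ((∏ k ∈ univ.erase (0 : Fin m), x (f k)) * v (f 0)) := by
  classical
  set σ : Equiv.Perm (Fin m) := Equiv.swap (0 : Fin m) j with hσ
  have hbij : Function.Bijective (fun f : Fin m → Fin n => f ∘ σ) := by
    constructor
    · intro f g h
      funext k
      have := congrFun h (σ.symm k)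
      simpa using this
    · intro f
      exact ⟨f ∘ σ.symm, by funext k; simp⟩
  refine (Fintype.sum_bijective _ hbij _ _ ?_).symm
  intro f
  have h1 : A (f ∘ σ) = A f := hA σ f
  have h2 : (f ∘ σ) j = f 0 := by simp [hσ, Equiv.swap_apply_right]
  have h3 : ∏ k ∈ univ.erase j, x ((f ∘ σ) k) = ∏ k ∈ univ.erase (0 : Fin m), x (f k) := by
    simp only [Function.comp_apply]
    have him : (univ.erase j).image σ = univ.erase (0 : Fin m) := by
      rw [Finset.image_erase σ.injective, Finset.image_univ_equiv]
      simp [hσ, Equiv.swap_apply_left]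
    have hpi := Finset.prod_image (s := univ.erase j) (g := fun k => σ k)
      (f := fun k => x (f k)) (fun a _ b _ h => σ.injective h)
    rw [him] at hpi
    exact hpi.symm
  rw [h1, h2, h3]

lemma fiber_sum [NeZero m] (A : (Fin m → Fin n) → ℝ) (x v : Fin n → ℝ) :
    ∑ f : Fin m → Fin n, A f * ((∏ k ∈ univ.erase (0 : Fin m), x (f k)) * v (f 0))
      = ∑ i : Fin n, tVec A x i * v i := by
  classical
  rw [← Finset.sum_fiberwise univ (fun f : Fin m → Fin n => f 0)
    (fun f => A f * ((∏ k ∈ univ.erase (0 : Fin m), x (f k)) * v (f 0)))]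
  refine Finset.sum_congr rfl fun i _ => ?_
  rw [tVec, Finset.sum_mul]
  refine Finset.sum_congr rfl fun f hf => ?_
  have : f 0 = i := (Finset.mem_filter.mp hf).2
  rw [this]; ring

lemma deriv_key [NeZero m] (A : (Fin m → Fin n) → ℝ) (hA : IsSymmT A) (x v : Fin n → ℝ) :
    ∑ f : Fin m → Fin n, A f * (∑ j : Fin m, (∏ k ∈ univ.erase j, x (f k)) * v (f j))
      = (m : ℝ) * ∑ i : Fin n, tVec A x i * v i := by
  classical
  have : ∑ f : Fin m → Fin n, A f * (∑ j : Fin m, (∏ k ∈ univ.erase j, x (f k)) * v (f j))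
      = ∑ j : Fin m, ∑ f : Fin m → Fin n, A f * ((∏ k ∈ univ.erase j, x (f k)) * v (f j)) := by
    rw [Finset.sum_comm]
    exact Finset.sum_congr rfl fun f _ => by rw [Finset.mul_sum]
  rw [this]
  have h2 : ∀ j : Fin m, ∑ f : Fin m → Fin n, A f * ((∏ k ∈ univ.erase j, x (f k)) * v (f j))
      = ∑ i : Fin n, tVec A x i * v i := fun j => by
    rw [swap_term A hA x v j, fiber_sum]
  rw [Finset.sum_congr rfl fun j _ => h2 j]
  simp [Finset.sum_const, nsmul_eq_mul]

/-- An even order (`m ≥ 2`) real symmetric tensor always has an H-eigenvalue. -/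
theorem even_order_symmetric_tensor_has_H_eigenvalue
    {m n : ℕ} [NeZero m] (hm : 2 ≤ m) (hmeven : Even m) (hn : 1 ≤ n)
    (A : (Fin m → Fin n) → ℝ) (hA : IsSymmT A) :
    ∃ (lam : ℝ) (x : Fin n → ℝ), x ≠ 0 ∧
      ∀ i : Fin n, tVec A x i = lam * x i ^ (m - 1) := by
  
  classical
  have hm0 : (m : ℝ) ≠ 0 := Nat.cast_ne_zero.mpr (NeZero.ne m)
  have hm1 : m - 1 ≠ 0 := by omega
  set G : (Fin n → ℝ) → ℝ := fun x => ∑ i, x i ^ m with hG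
  set S : Set (Fin n → ℝ) := {x | G x = 1} with hS
  have hGc : Continuous G := continuous_finset_sum _ fun i _ => (continuous_apply i).pow m
  have hφc : Continuous (tApply A) := by
    unfold tApply
    exact continuous_finset_sum _ fun f _ =>
      continuous_const.mul (continuous_finset_prod _ fun j _ => continuous_apply (f j))
  have hclosed : IsClosed S := isClosed_eq hGc continuous_const
  have hbdd : Bornology.IsBounded S := by
    apply (Metric.isBounded_closedBall (x := (0 : Fin n → ℝ)) (r := 1)).subset
    intro x hx
    rw [Metric.mem_closedBall, dist_zero_right, pi_norm_le_iff_of_nonneg zero_le_one]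
    intro i
    have hnn : ∀ k, 0 ≤ x k ^ m := fun k => hmeven.pow_nonneg _
    have hle : x i ^ m ≤ 1 := by
      have := Finset.single_le_sum (f := fun k => x k ^ m) (fun k _ => hnn k) (Finset.mem_univ i)
      exact le_of_le_of_eq this hx
    have habs : |x i| ^ m ≤ 1 := by rwa [hmeven.pow_abs]
    rw [Real.norm_eq_abs]
    exact (pow_le_one_iff_of_nonneg (abs_nonneg _) (NeZero.ne m)).mp habs
  have hScpt : IsCompact S := Metric.isCompact_of_isClosed_isBounded hclosed hbdd
  have hSne : S.Nonempty := by
    refine ⟨Pi.single ⟨0, hn⟩ 1, ?_⟩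
    show G _ = 1
    simp only [hG]
    rw [Finset.sum_eq_single (⟨0, hn⟩ : Fin n)]
    · simp
    · intro b _ hb; rw [Pi.single_eq_of_ne hb]; exact zero_pow (NeZero.ne m)
    · simp
  obtain ⟨x₀, hx₀S, hmax⟩ := hScpt.exists_isMaxOn hSne hφc.continuousOn
  have hGx₀ : G x₀ = 1 := hx₀S
  set G' : (Fin n → ℝ) →L[ℝ] ℝ :=
    ∑ i, ((m : ℝ) * x₀ i ^ (m - 1)) • ContinuousLinearMap.proj i with hG'
  have hGd : HasStrictFDerivAt G G' x₀ :=
    HasStrictFDerivAt.fun_sum fun i _ =>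
      (hasStrictDerivAt_pow m (x₀ i)).comp_hasStrictFDerivAt x₀
        (hasStrictFDerivAt_apply i x₀)
  set D : (Fin n → ℝ) →L[ℝ] ℝ :=
    ∑ f : Fin m → Fin n, A f •
      (∑ j : Fin m, (∏ k ∈ univ.erase j, x₀ (f k)) • ContinuousLinearMap.proj (f j)) with hD
  have hφd : HasStrictFDerivAt (tApply A) D x₀ := by
    unfold tApply
    exact HasStrictFDerivAt.fun_sum fun f _ =>
      (HasStrictFDerivAt.finset_prod (g := fun (j : Fin m) (y : Fin n → ℝ) => y (f j)) fun j _ =>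
        (hasStrictFDerivAt_apply (f j) x₀)).const_mul (A f)
  have hextr : IsLocalExtrOn (tApply A) {x | G x = G x₀} x₀ := by
    rw [hGx₀]
    exact Or.inr (hmax.filter_mono (Filter.le_principal_iff.mpr self_mem_nhdsWithin))
  obtain ⟨a, b, hab, heq⟩ := hextr.exists_multipliers_of_hasStrictFDerivAt_1d hGd hφd
  have hval : ∀ i : Fin n,
      a * ((m : ℝ) * x₀ i ^ (m - 1)) + b * ((m : ℝ) * tVec A x₀ i) = 0 := by
    intro i
    have h := ContinuousLinearMap.ext_iff.mp heq (Pi.single i 1)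
    have hG'v : G' (Pi.single i 1) = (m : ℝ) * x₀ i ^ (m - 1) := by
      simp only [hG', ContinuousLinearMap.sum_apply, ContinuousLinearMap.smul_apply,
        ContinuousLinearMap.proj_apply, smul_eq_mul, Pi.single_apply]
      simp [mul_ite]
    have hDv : D (Pi.single i 1) = (m : ℝ) * tVec A x₀ i := by
      have hk := deriv_key A hA x₀ (Pi.single i 1)
      have : D (Pi.single i 1) = ∑ f : Fin m → Fin n,
          A f * (∑ j : Fin m, (∏ k ∈ univ.erase j, x₀ (f k)) * ((Pi.single i 1 : Fin n → ℝ) (f j))) := by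
        simp [hD, ContinuousLinearMap.sum_apply, ContinuousLinearMap.smul_apply,
          ContinuousLinearMap.proj_apply, smul_eq_mul]
      rw [this, hk]
      congr 1
      simp only [Pi.single_apply, mul_ite, mul_one, mul_zero]
      simp
    rw [ContinuousLinearMap.add_apply, ContinuousLinearMap.smul_apply,
      ContinuousLinearMap.smul_apply, hG'v, hDv] at h
    simpa using h
  have hbne : b ≠ 0 := by
    rintro rfl
    have hane : a ≠ 0 := by
      intro ha; exact hab (by simp [ha])
    have hx0 : ∀ i, x₀ i = 0 := by
      intro i
      have h := hval i
      have hp : x₀ i ^ (m - 1) = 0 := by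
        have h' : a * ((m : ℝ) * x₀ i ^ (m - 1)) = 0 := by linarith
        rcases mul_eq_zero.mp h' with h'' | h''
        · exact absurd h'' hane
        · rcases mul_eq_zero.mp h'' with h3 | h3
          · exact absurd h3 hm0
          · exact h3
      exact pow_eq_zero_iff hm1 |>.mp hp
    have hzero : G x₀ = 0 := by
      simp [hG, hx0, zero_pow (NeZero.ne m)]
    rw [hGx₀] at hzero
    exact one_ne_zero hzero
  refine ⟨-(a / b), x₀, ?_, ?_⟩
  · intro h0
    rw [h0] at hGx₀
    simp [hG, zero_pow (NeZero.ne m)] at hGx₀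
  · intro i
    have h := hval i
    have h' : (m : ℝ) * (a * x₀ i ^ (m - 1) + b * tVec A x₀ i) = 0 := by ring_nf; linarith
    have h'' : a * x₀ i ^ (m - 1) + b * tVec A x₀ i = 0 := by
      rcases mul_eq_zero.mp h' with h3 | h3
      · exact absurd h3 hm0
      · exact h3
    field_simp
    linarith
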